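/- arXiv:2601.21614 — 8 statements merged into one kernel-verified Lean document; each statement's English description precedes it below -/
import Mathlib

section
/- Let k be a field, 𝔥 an abelian Lie algebra over k, and M an 𝔥-module that is the direct sum of its 𝔥-weight spaces. Fix a linear functional μ : 𝔥 → k and a natural number 𝔟 such that the weight space M^μ has k-dimension at most 𝔟. Suppose (M_i)_{i≥1} and (N_i)_{i≥1} are 𝔥-submodules of M forming an infinite chain ⋯ ⊆ N₂ ⊊ M₂ ⊆ N₁ ⊊ M₁ ⊆ M, i.e. N_i is a proper submodule of M_i and M_{i+1} ⊆ N_i for every i ≥ 1. Then the set of indices i ≥ 1 for which the μ-weight space of the quotient module M_i/N_i is nonzero has at most 𝔟 + 1 elements. -/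
variable (k : Type*) [Field k] (H : Type*) [LieRing H] [LieAlgebra k H]
  (M : Type*) [AddCommGroup M] [Module k M] [LieRingModule H M] [LieModule k H M]

/-- The `μ`-weight space of the `H`-module `M`:
`M^μ = {v ∈ M : h • v = μ(h) • v for all h : H}`. -/
def weightSpace (μ : H →ₗ[k] k) : Submodule k M where
  carrier := {v | ∀ h : H, ⁅h, v⁆ = μ h • v}
  add_mem' := by
    intro a b ha hb h
    rw [lie_add, ha h, hb h, smul_add]
  zero_mem' := by
    intro h
    rw [lie_zero, smul_zero]
  smul_mem' := by
    intro c v hv h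
    rw [lie_smul, hv h, smul_comm]

section Aux

variable {k : Type*} [Field k] {H : Type*} [LieRing H] [LieAlgebra k H]
  {M : Type*} [AddCommGroup M] [Module k M] [LieRingModule H M] [LieModule k H M]
  [DecidableEq (H →ₗ[k] k)]

variable (hM : DirectSum.IsInternal fun μ : H →ₗ[k] k => weightSpace k H M μ)

/-- Projection of `M` onto the `l`-weight space, regarded as a map `M →ₗ[k] M`. -/
noncomputable def wproj (l : H →ₗ[k] k) : M →ₗ[k] M :=
  (weightSpace k H M l).subtype ∘ₗ
    (DirectSum.component k (H →ₗ[k] k) (fun μ => ↥(weightSpace k H M μ)) l) ∘ₗ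
    (LinearEquiv.ofBijective
      (DirectSum.coeLinearMap fun μ : H →ₗ[k] k => weightSpace k H M μ) hM).symm.toLinearMap

theorem wproj_apply (l : H →ₗ[k] k) (v : M) :
    wproj hM l v = (((LinearEquiv.ofBijective
      (DirectSum.coeLinearMap fun μ : H →ₗ[k] k => weightSpace k H M μ) hM).symm v) l : M) :=
  rfl

theorem wproj_mem (l : H →ₗ[k] k) (v : M) : wproj hM l v ∈ weightSpace k H M l := by
  rw [wproj_apply]
  exact Submodule.coe_mem _

theorem wproj_apply_of_mem {l l' : H →ₗ[k] k} {u : M} (hu : u ∈ weightSpace k H M l) :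
    wproj hM l' u = if l' = l then u else 0 := by
  by_cases h : l' = l
  · subst h
    rw [wproj_apply, hM.ofBijective_coeLinearMap_of_mem hu, if_pos rfl]
  · rw [wproj_apply, hM.ofBijective_coeLinearMap_of_mem_ne (Ne.symm h) hu, if_neg h]
    rfl

theorem wproj_wproj (l l' : H →ₗ[k] k) (v : M) :
    wproj hM l' (wproj hM l v) = if l' = l then wproj hM l v else 0 :=
  wproj_apply_of_mem hM (wproj_mem hM l v)

/-- Every vector has only finitely many nonzero weight components. -/
theorem exists_wproj_finset (v : M) :
    ∃ s : Finset (H →ₗ[k] k), ∀ l ∉ s, wproj hM l v = 0 := by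
  classical
  refine ⟨((LinearEquiv.ofBijective
      (DirectSum.coeLinearMap fun μ : H →ₗ[k] k => weightSpace k H M μ) hM).symm v).support,
    fun l hl => ?_⟩
  rw [wproj_apply]
  rw [DFinsupp.notMem_support_iff] at hl
  rw [hl]
  rfl

/-- A vector is the sum of its weight components. -/
theorem sum_wproj (v : M) (s : Finset (H →ₗ[k] k)) (hs : ∀ l ∉ s, wproj hM l v = 0) :
    ∑ l ∈ s, wproj hM l v = v := by
  classical
  set e := LinearEquiv.ofBijective
      (DirectSum.coeLinearMap fun μ : H →ₗ[k] k => weightSpace k H M μ) hM with he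
  have hv : (DirectSum.coeLinearMap fun μ : H →ₗ[k] k => weightSpace k H M μ) (e.symm v) = v := by
    have := e.apply_symm_apply v
    exact this
  have hsum := DirectSum.sum_support_of (e.symm v)
  have hsum2 := congrArg (DirectSum.coeLinearMap fun μ : H →ₗ[k] k => weightSpace k H M μ) hsum
  rw [map_sum, hv] at hsum2
  have hterm : ∀ l, (DirectSum.coeLinearMap fun μ : H →ₗ[k] k => weightSpace k H M μ)
      (DirectSum.of (fun μ => ↥(weightSpace k H M μ)) l ((e.symm v) l)) = wproj hM l v := by
    intro l
    rw [DirectSum.coeLinearMap_of, wproj_apply]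
  have hss : (e.symm v).support ⊆ s := by
    intro l hl
    by_contra hls
    have h0 := hs l hls
    rw [wproj_apply, ← he] at h0
    rw [DFinsupp.mem_support_iff] at hl
    exact hl (Subtype.ext h0)
  calc ∑ l ∈ s, wproj hM l v
      = ∑ l ∈ (e.symm v).support, wproj hM l v := by
        refine (Finset.sum_subset hss fun l _ hls => ?_).symm
        rw [wproj_apply, ← he, DFinsupp.notMem_support_iff.mp hls]
        rfl
    _ = ∑ l ∈ (e.symm v).support, (DirectSum.coeLinearMap fun μ : H →ₗ[k] k => weightSpace k H M μ)
          (DirectSum.of (fun μ => ↥(weightSpace k H M μ)) l ((e.symm v) l)) :=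
        Finset.sum_congr rfl fun l _ => (hterm l).symm
    _ = v := hsum2

theorem lie_finset_sum {ι : Type*} (h : H) (s : Finset ι) (f : ι → M) :
    ⁅h, ∑ i ∈ s, f i⁆ = ∑ i ∈ s, ⁅h, f i⁆ := by
  induction s using Finset.cons_induction with
  | empty => simp
  | cons a s ha ih => rw [Finset.sum_cons, Finset.sum_cons, lie_add, ih]

theorem lie_wproj (h : H) (l : H →ₗ[k] k) (v : M) :
    ⁅h, wproj hM l v⁆ = l h • wproj hM l v :=
  wproj_mem hM l v h

/-- The weight projections intertwine the action of `H`. -/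
theorem wproj_lie (h : H) (l : H →ₗ[k] k) (v : M) :
    wproj hM l ⁅h, v⁆ = l h • wproj hM l v := by
  classical
  obtain ⟨s, hs⟩ := exists_wproj_finset hM v
  have hv := sum_wproj hM v s hs
  have : ⁅h, v⁆ = ∑ l' ∈ s, (l' h) • wproj hM l' v := by
    conv_lhs => rw [← hv]
    rw [lie_finset_sum]
    exact Finset.sum_congr rfl fun l' _ => lie_wproj hM h l' v
  rw [this, map_sum]
  have : ∀ l' ∈ s, wproj hM l ((l' h) • wproj hM l' v) =
      if l = l' then (l' h) • wproj hM l' v else 0 := by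
    intro l' _
    rw [map_smul, wproj_wproj]
    split_ifs <;> simp
  rw [Finset.sum_congr rfl this, Finset.sum_ite_eq]
  by_cases hls : l ∈ s
  · rw [if_pos hls]
  · rw [if_neg hls, hs l hls, smul_zero]

/-- **Grading lemma**: an `H`-invariant submodule contains the weight components of each of
its elements. -/
theorem wproj_mem_of_mem (N : Submodule k M) (hN : ∀ (h : H) (v : M), v ∈ N → ⁅h, v⁆ ∈ N) :
    ∀ (n : ℕ) (s : Finset (H →ₗ[k] k)), s.card ≤ n → ∀ v ∈ N,
      (∀ l ∉ s, wproj hM l v = 0) → ∀ l, wproj hM l v ∈ N := by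
  classical
  intro n
  induction n with
  | zero =>
    intro s hcard v hv hs l
    rw [Nat.le_zero, Finset.card_eq_zero] at hcard
    subst hcard
    by_cases hls : l ∈ (∅ : Finset (H →ₗ[k] k))
    · exact absurd hls (Finset.notMem_empty l)
    · rw [hs l hls]; exact N.zero_mem
  | succ n ih =>
    intro s hcard v hv hs l
    by_cases htriv : ∀ l₁ ∈ s, ∀ l₂ ∈ s, l₁ = l₂
    · -- s has at most one element
      by_cases hls : l ∈ s
      · have hsing : s = {l} := by
          apply Finset.eq_singleton_iff_unique_mem.mpr
          exact ⟨hls, fun x hx => htriv x hx l hls⟩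
        have := sum_wproj hM v s hs
        rw [hsing, Finset.sum_singleton] at this
        rw [this]; exact hv
      · rw [hs l hls]; exact N.zero_mem
    · push_neg at htriv
      obtain ⟨l₁, hl₁, l₂, hl₂, hne⟩ := htriv
      obtain ⟨h₀, hh₀⟩ : ∃ h₀ : H, l₁ h₀ ≠ l₂ h₀ := by
        by_contra hc
        push_neg at hc
        exact hne (LinearMap.ext hc)
      set w := ⁅h₀, v⁆ - (l₁ h₀) • v with hw
      have hwN : w ∈ N := N.sub_mem (hN h₀ v hv) (N.smul_mem _ hv)
      have hwproj : ∀ l', wproj hM l' w = (l' h₀ - l₁ h₀) • wproj hM l' v := by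
        intro l'
        rw [hw, map_sub, map_smul, wproj_lie, sub_smul]
      have hwzero : ∀ l' ∉ s.erase l₁, wproj hM l' w = 0 := by
        intro l' hl'
        rw [hwproj]
        by_cases hl's : l' ∈ s
        · have : l' = l₁ := by
            by_contra hne'
            exact hl' (Finset.mem_erase.mpr ⟨hne', hl's⟩)
          subst this
          rw [sub_self, zero_smul]
        · rw [hs l' hl's, smul_zero]
      have hwcard : (s.erase l₁).card ≤ n := by
        have := Finset.card_erase_of_mem hl₁
        omega
      have hwcomp : ∀ l', wproj hM l' w ∈ N := ih (s.erase l₁) hwcard w hwN hwzero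
      -- components with l' h₀ ≠ l₁ h₀ are in N
      have hgood : ∀ l', l' h₀ ≠ l₁ h₀ → wproj hM l' v ∈ N := by
        intro l' hl'
        have := hwcomp l'
        rw [hwproj] at this
        have h2 := N.smul_mem (l' h₀ - l₁ h₀)⁻¹ this
        rwa [smul_smul, inv_mul_cancel₀ (sub_ne_zero.mpr hl'), one_smul] at h2
      set t := s.filter (fun l' => l' h₀ ≠ l₁ h₀) with ht
      set v' := v - ∑ l' ∈ t, wproj hM l' v with hv'
      have hv'N : v' ∈ N := by
        refine N.sub_mem hv (Submodule.sum_mem N fun l' hl' => ?_)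
        rw [ht, Finset.mem_filter] at hl'
        exact hgood l' hl'.2
      have hv'proj : ∀ l', wproj hM l' v' =
          wproj hM l' v - (if l' ∈ t then wproj hM l' v else 0) := by
        intro l'
        rw [hv', map_sub, map_sum]
        congr 1
        have : ∀ x ∈ t, wproj hM l' (wproj hM x v) =
            if l' = x then wproj hM x v else 0 := fun x _ => wproj_wproj hM x l' v
        rw [Finset.sum_congr rfl this, Finset.sum_ite_eq]
      have hv'zero : ∀ l' ∉ s.erase l₂, wproj hM l' v' = 0 := by
        intro l' hl'
        rw [hv'proj]
        by_cases hl's : l' ∈ s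
        · have hl'eq : l' = l₂ := by
            by_contra hne'
            exact hl' (Finset.mem_erase.mpr ⟨hne', hl's⟩)
          subst hl'eq
          have : l' ∈ t := by
            rw [ht, Finset.mem_filter]
            exact ⟨hl's, fun hc => hh₀ hc.symm⟩
          rw [if_pos this, sub_self]
        · have : l' ∉ t := by
            rw [ht, Finset.mem_filter]
            exact fun hc => hl's hc.1
          rw [if_neg this, hs l' hl's, sub_zero]
      have hv'card : (s.erase l₂).card ≤ n := by
        have := Finset.card_erase_of_mem hl₂
        omega
      have hv'comp : ∀ l', wproj hM l' v' ∈ N := ih (s.erase l₂) hv'card v' hv'N hv'zero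
      by_cases hlt : l ∈ t
      · rw [ht, Finset.mem_filter] at hlt
        exact hgood l hlt.2
      · have := hv'comp l
        rw [hv'proj, if_neg hlt, sub_zero] at this
        exact this

/-- If the coset of `v` is a `μ`-weight vector of `M/N` and the `μ`-component of `v`
vanishes, then `v ∈ N`. -/
theorem mem_of_wproj_eq_zero (N : Submodule k M) (hN : ∀ (h : H) (v : M), v ∈ N → ⁅h, v⁆ ∈ N)
    (μ : H →ₗ[k] k) :
    ∀ (n : ℕ) (s : Finset (H →ₗ[k] k)), s.card ≤ n → ∀ v : M,
      (∀ l ∉ s, wproj hM l v = 0) → wproj hM μ v = 0 →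
      (∀ h : H, ⁅h, v⁆ - μ h • v ∈ N) → v ∈ N := by
  classical
  intro n
  induction n with
  | zero =>
    intro s hcard v hs _ _
    rw [Nat.le_zero, Finset.card_eq_zero] at hcard
    subst hcard
    have := sum_wproj hM v ∅ hs
    rw [Finset.sum_empty] at this
    rw [← this]; exact N.zero_mem
  | succ n ih =>
    intro s hcard v hs hμ hwt
    by_cases hex : ∃ l₁ ∈ s, wproj hM l₁ v ≠ 0
    · obtain ⟨l₁, hl₁, hl₁ne⟩ := hex
      have hl₁μ : l₁ ≠ μ := by
        rintro rfl
        exact hl₁ne hμ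
      obtain ⟨h₀, hh₀⟩ : ∃ h₀ : H, l₁ h₀ ≠ μ h₀ := by
        by_contra hc
        push_neg at hc
        exact hl₁μ (LinearMap.ext hc)
      set w := ⁅h₀, v⁆ - (μ h₀) • v with hw
      have hwN : w ∈ N := hwt h₀
      have hwproj : ∀ l', wproj hM l' w = (l' h₀ - μ h₀) • wproj hM l' v := by
        intro l'
        rw [hw, map_sub, map_smul, wproj_lie, sub_smul]
      have hwzero : ∀ l' ∉ s, wproj hM l' w = 0 := by
        intro l' hl'
        rw [hwproj, hs l' hl', smul_zero]
      have hwcomp : ∀ l', wproj hM l' w ∈ N :=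
        wproj_mem_of_mem hM N hN (n + 1) s hcard w hwN hwzero
      have hgood : ∀ l', l' h₀ ≠ μ h₀ → wproj hM l' v ∈ N := by
        intro l' hl'
        have := hwcomp l'
        rw [hwproj] at this
        have h2 := N.smul_mem (l' h₀ - μ h₀)⁻¹ this
        rwa [smul_smul, inv_mul_cancel₀ (sub_ne_zero.mpr hl'), one_smul] at h2
      set t := s.filter (fun l' => l' h₀ ≠ μ h₀) with ht
      set v' := v - ∑ l' ∈ t, wproj hM l' v with hv'
      have htN : ∀ l' ∈ t, wproj hM l' v ∈ N := by
        intro l' hl'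
        rw [ht, Finset.mem_filter] at hl'
        exact hgood l' hl'.2
      have hv'proj : ∀ l', wproj hM l' v' =
          wproj hM l' v - (if l' ∈ t then wproj hM l' v else 0) := by
        intro l'
        rw [hv', map_sub, map_sum]
        congr 1
        have : ∀ x ∈ t, wproj hM l' (wproj hM x v) =
            if l' = x then wproj hM x v else 0 := fun x _ => wproj_wproj hM x l' v
        rw [Finset.sum_congr rfl this, Finset.sum_ite_eq]
      have hμt : μ ∉ t := by
        rw [ht, Finset.mem_filter]
        rintro ⟨-, hc⟩
        exact hc rfl
      have hv'μ : wproj hM μ v' = 0 := by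
        rw [hv'proj, if_neg hμt, hμ, sub_zero]
      have hv'wt : ∀ h : H, ⁅h, v'⁆ - μ h • v' ∈ N := by
        intro h
        have heq : ⁅h, v'⁆ - μ h • v' =
            (⁅h, v⁆ - μ h • v) - ∑ l' ∈ t, ((l' h - μ h) • wproj hM l' v) := by
          rw [hv', lie_sub, smul_sub, lie_finset_sum, Finset.smul_sum]
          rw [sub_sub_sub_comm, ← Finset.sum_sub_distrib]
          congr 1
          refine Finset.sum_congr rfl fun l' _ => ?_
          rw [lie_wproj, sub_smul]
        rw [heq]
        refine N.sub_mem (hwt h) (Submodule.sum_mem N fun l' hl' => ?_)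
        exact N.smul_mem _ (htN l' hl')
      have hv'zero : ∀ l' ∉ s.erase l₁, wproj hM l' v' = 0 := by
        intro l' hl'
        rw [hv'proj]
        by_cases hl's : l' ∈ s
        · have hl'eq : l' = l₁ := by
            by_contra hne'
            exact hl' (Finset.mem_erase.mpr ⟨hne', hl's⟩)
          subst hl'eq
          have : l' ∈ t := by
            rw [ht, Finset.mem_filter]
            exact ⟨hl's, hh₀⟩
          rw [if_pos this, sub_self]
        · have : l' ∉ t := by
            rw [ht, Finset.mem_filter]
            exact fun hc => hl's hc.1
          rw [if_neg this, hs l' hl's, sub_zero]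
      have hv'card : (s.erase l₁).card ≤ n := by
        have := Finset.card_erase_of_mem hl₁
        omega
      have hv'N : v' ∈ N := ih (s.erase l₁) hv'card v' hv'zero hv'μ hv'wt
      have : v = v' + ∑ l' ∈ t, wproj hM l' v := by rw [hv']; abel
      rw [this]
      exact N.add_mem hv'N (Submodule.sum_mem N htN)
    · push_neg at hex
      have := sum_wproj hM v s hs
      rw [Finset.sum_congr rfl fun l hl => hex l hl, Finset.sum_const, smul_zero] at this
      rw [← this]; exact N.zero_mem

end Aux

/-- Let `k` be a field, `H` an abelian Lie algebra over `k`, and `M` an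
`H`-module which is the direct sum of its `H`-weight spaces.  Fix `μ : H → k` and `b : ℕ` with
`dim_k M^μ ≤ b`.  If `(Mseq i)_{i ≥ 1}` and `(Nseq i)_{i ≥ 1}` are `H`-submodules of `M`
forming an infinite chain `⋯ ⊆ N₂ ⊊ M₂ ⊆ N₁ ⊊ M₁ ⊆ M`, then the set of indices `i ≥ 1` for
which the `μ`-weight space of the quotient module `Mseq i / Nseq i` is nonzero (i.e. there is
`v ∈ Mseq i` with `v ∉ Nseq i` whose coset is a weight vector of weight `μ`) has at most
`b + 1` elements. -/
theorem stmt_0 [IsLieAbelian H] [DecidableEq (H →ₗ[k] k)]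
    (hM : DirectSum.IsInternal fun μ : H →ₗ[k] k => weightSpace k H M μ)
    (μ : H →ₗ[k] k) (b : ℕ)
    (hb : Module.rank k (weightSpace k H M μ) ≤ b)
    (Mseq Nseq : ℕ → LieSubmodule k H M)
    (hlt : ∀ i, 1 ≤ i → Nseq i < Mseq i)
    (hchain : ∀ i, 1 ≤ i → Mseq (i + 1) ≤ Nseq i) :
    {i : ℕ | 1 ≤ i ∧ ∃ v ∈ Mseq i, v ∉ Nseq i ∧
        ∀ h : H, ⁅h, v⁆ - μ h • v ∈ Nseq i}.encard ≤ (b : ℕ∞) + 1 := by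
  classical
  set W : Submodule k M := weightSpace k H M μ with hW
  haveI hWfd : FiniteDimensional k W :=
    IsNoetherian.iff_fg.1 (IsNoetherian.iff_rank_lt_aleph0.2
      (hb.trans_lt (Cardinal.nat_lt_aleph0 b)))
  have hWrank : Module.finrank k W ≤ b := Module.finrank_le_of_rank_le hb
  set S := {i : ℕ | 1 ≤ i ∧ ∃ v ∈ Mseq i, v ∉ Nseq i ∧
      ∀ h : H, ⁅h, v⁆ - μ h • v ∈ Nseq i} with hS
  -- for each i in S, produce a weight vector in Mseq i not in Nseq i
  have key : ∀ i ∈ S, ∃ u : M, u ∈ W ∧ u ∈ Mseq i ∧ u ∉ Nseq i := by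
    rintro i ⟨hi1, v, hvM, hvN, hwt⟩
    refine ⟨wproj hM μ v, wproj_mem hM μ v, ?_, ?_⟩
    · -- grading lemma applied to Mseq i
      obtain ⟨s, hs⟩ := exists_wproj_finset hM v
      exact wproj_mem_of_mem hM (Mseq i).toSubmodule
        (fun h w hw => (Mseq i).lie_mem hw) s.card s le_rfl v hvM hs μ
    · -- if wproj μ v ∈ Nseq i then v ∈ Nseq i, contradiction
      intro hu
      apply hvN
      have hvu : v - wproj hM μ v ∈ (Nseq i).toSubmodule := by
        obtain ⟨s, hs⟩ := exists_wproj_finset hM (v - wproj hM μ v)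
        refine mem_of_wproj_eq_zero hM (Nseq i).toSubmodule
          (fun h w hw => (Nseq i).lie_mem hw) μ s.card s le_rfl _ hs ?_ ?_
        · rw [map_sub, wproj_apply_of_mem hM (wproj_mem hM μ v), if_pos rfl, sub_self]
        · intro h
          have h1 : ⁅h, wproj hM μ v⁆ - μ h • wproj hM μ v = 0 := by
            rw [lie_wproj, sub_self]
          have heq : ⁅h, v - wproj hM μ v⁆ - μ h • (v - wproj hM μ v) =
              (⁅h, v⁆ - μ h • v) - (⁅h, wproj hM μ v⁆ - μ h • wproj hM μ v) := by
            rw [lie_sub, smul_sub]; abel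
          rw [heq, h1, sub_zero]
          exact hwt h
      have : v = (v - wproj hM μ v) + wproj hM μ v := by abel
      rw [this]
      exact (Nseq i).add_mem hvu hu
  -- Mseq j ≤ Nseq i for 1 ≤ i < j
  have hmono : ∀ i j : ℕ, 1 ≤ i → i < j → Mseq j ≤ Nseq i := by
    intro i j hi hij
    induction j with
    | zero => omega
    | succ j ihj =>
      rcases Nat.lt_succ_iff_lt_or_eq.mp hij with h | h
      · exact le_trans (le_trans (hchain j (by omega)) (le_of_lt (hlt j (by omega)))) (ihj h)
      · subst h
        exact hchain i hi
  -- the dimension function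
  set g : ℕ → ℕ := fun i => Module.finrank k ((Mseq i).toSubmodule ⊓ W : Submodule k M) with hg
  have hfd : ∀ i, FiniteDimensional k ((Mseq i).toSubmodule ⊓ W : Submodule k M) := fun i =>
    Submodule.finiteDimensional_of_le inf_le_right
  have hgS : ∀ i ∈ S, 1 ≤ g i ∧ g i ≤ b := by
    intro i hi
    obtain ⟨u, huW, huM, huN⟩ := key i hi
    haveI := hfd i
    constructor
    · have hu0 : u ≠ 0 := fun hc => huN (hc ▸ (Nseq i).zero_mem)
      have humem : u ∈ ((Mseq i).toSubmodule ⊓ W : Submodule k M) := ⟨huM, huW⟩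
      have : 0 < Module.finrank k ((Mseq i).toSubmodule ⊓ W : Submodule k M) := by
        rw [Module.finrank_pos_iff]
        exact ⟨⟨⟨u, humem⟩, 0, fun hc => hu0 (congrArg Subtype.val hc)⟩⟩
      exact this
    · exact le_trans (Submodule.finrank_mono inf_le_right) hWrank
  have hgmono : ∀ i ∈ S, ∀ j ∈ S, i < j → g j < g i := by
    intro i hi j hj hij
    obtain ⟨u, huW, huM, huN⟩ := key i hi
    haveI := hfd i
    refine Submodule.finrank_lt_finrank_of_lt (lt_of_le_of_ne ?_ ?_)
    · intro x hx
      exact ⟨(hlt i hi.1).le (hmono i j hi.1 hij hx.1), hx.2⟩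
    · intro hc
      have humem : u ∈ ((Mseq i).toSubmodule ⊓ W : Submodule k M) := ⟨huM, huW⟩
      rw [← hc] at humem
      exact huN (hmono i j hi.1 hij humem.1)
  have hinj : Set.InjOn g S := by
    intro i hi j hj hgij
    by_contra hne
    rcases lt_or_gt_of_ne hne with h | h
    · exact absurd hgij (Nat.ne_of_gt (hgmono i hi j hj h))
    · exact absurd hgij (Nat.ne_of_lt (hgmono j hj i hi h))
  have himg : g '' S ⊆ ↑(Finset.Icc 1 b) := by
    rintro x ⟨i, hi, rfl⟩
    obtain ⟨h1, h2⟩ := hgS i hi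
    simp only [Finset.coe_Icc, Set.mem_Icc]
    exact ⟨h1, h2⟩
  calc S.encard = (g '' S).encard := (hinj.encard_image).symm
    _ ≤ (↑(Finset.Icc 1 b) : Set ℕ).encard := Set.encard_le_encard himg
    _ = ((Finset.Icc 1 b).card : ℕ∞) := Set.encard_coe_eq_coe_finsetCard _
    _ ≤ (b : ℕ∞) + 1 := by
        rw [Nat.card_Icc]
        simp only [Nat.add_sub_cancel]
        exact le_self_add
end

section
/- Let k be a field, 𝔤 a Lie algebra over k, 𝔥 an abelian Lie subalgebra of 𝔤, 𝔥̇ a k-subspace of 𝔥, and M a 𝔤-module that is the direct sum of its 𝔥-weight spaces. Suppose there exists ℓ ∈ ℕ such that every admissible chain of submodules of M has un-confined rank at most ℓ. If M admits at least one admissible chain of submodules, then there exist k₀ ∈ ℕ and an admissible chain C of submodules of M such that C is tail-k₀-confined. -/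
variable (k : Type*) [Field k] (g : Type*) [LieRing g] [LieAlgebra k g]
  (H : LieSubalgebra k g) (Hdot : Submodule k H)
  (M : Type*) [AddCommGroup M] [Module k M] [LieRingModule g M] [LieModule k g M]

/-- `v` is an `H`-weight vector of `M` of weight `μ`. -/
def IsWeightVec (μ : ↥H →ₗ[k] k) (v : M) : Prop :=
  ∀ h : H, ⁅(h : g), v⁆ = μ h • v

/-- The `μ`-weight space of `M` with respect to `H`. -/
def wtSpace (μ : ↥H →ₗ[k] k) : Submodule k M where
  carrier := {v | IsWeightVec k g H M μ v}
  add_mem' := by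
    intro a b ha hb h
    rw [lie_add, ha h, hb h, smul_add]
  zero_mem' := by
    intro h
    rw [lie_zero, smul_zero]
  smul_mem' := by
    intro c v hv h
    rw [lie_smul, hv h, smul_comm]

/-- `μ` lies in the support of the quotient module `P/Q`, that is, the `μ`-weight space of
`P/Q` is nonzero: there is `v ∈ P`, `v ∉ Q`, whose coset modulo `Q` is a weight vector of
weight `μ`. -/
def QuotHasWeight (P Q : LieSubmodule k g M) (μ : ↥H →ₗ[k] k) : Prop :=
  ∃ v ∈ P, v ∉ Q ∧ ∀ h : H, ⁅(h : g), v⁆ - μ h • v ∈ Q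

/-- The quotient module `P/Q` is confined: every weight in its support restricts to zero
on `Hdot`. -/
def QuotConfined (P Q : LieSubmodule k g M) : Prop :=
  ∀ μ : ↥H →ₗ[k] k, QuotHasWeight k g H M P Q μ → ∀ x ∈ Hdot, μ x = 0

/-- An admissible chain `⋯ ⊆ N₂ ⊊ M₂ ⊆ N₁ ⊊ M₁ ⊆ M` of `g`-submodules of `M` (indices here
start at `0`): each `Mseq i` is generated by a single nonzero weight vector and each quotient
`Mseq i / Nseq i` is a simple `g`-module (equivalently, `Nseq i` is a maximal proper
submodule of `Mseq i`). -/
structure AdmissibleChain : Type _ where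
  Mseq : ℕ → LieSubmodule k g M
  Nseq : ℕ → LieSubmodule k g M
  proper : ∀ i, Nseq i < Mseq i
  descending : ∀ i, Mseq (i + 1) ≤ Nseq i
  generated : ∀ i, ∃ v : M, v ≠ 0 ∧ (∃ μ : ↥H →ₗ[k] k, IsWeightVec k g H M μ v) ∧
    Mseq i = LieSubmodule.lieSpan k g {v}
  simpleQuot : ∀ i, ∀ P : LieSubmodule k g M,
    Nseq i ≤ P → P ≤ Mseq i → P = Nseq i ∨ P = Mseq i

/-- The un-confined rank of an admissible chain: the cardinality of the set of indices whose
corresponding simple quotient is un-confined. -/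
noncomputable def unconfinedRank (C : AdmissibleChain k g H M) : ℕ∞ :=
  {i : ℕ | ¬ QuotConfined k g H Hdot M (C.Mseq i) (C.Nseq i)}.encard

/-- `C'` is an `n`-overlapped tail-extension of `C`. -/
def IsTailExtension (C C' : AdmissibleChain k g H M) (n : ℕ) : Prop :=
  ∀ i < n, C'.Mseq i = C.Mseq i ∧ C'.Nseq i = C.Nseq i

/-- The chain `C` is `n`-confined: all quotients beyond the first `n` are confined. -/
def IsNConfined (C : AdmissibleChain k g H M) (n : ℕ) : Prop :=
  ∀ i, n ≤ i → QuotConfined k g H Hdot M (C.Mseq i) (C.Nseq i)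

/-- The chain `C` is tail-`n`-confined: every `n`-overlapped tail-extension of `C` is
`n`-confined. -/
def IsTailNConfined (C : AdmissibleChain k g H M) (n : ℕ) : Prop :=
  ∀ C' : AdmissibleChain k g H M,
    IsTailExtension k g H M C C' n → IsNConfined k g H Hdot M C' n

/-- Let `k` be a field, `g` a Lie algebra over `k`, `H` an abelian Lie
subalgebra of `g`, `Hdot` a subspace of `H`, and `M` a `g`-module that is the direct sum of
its `H`-weight spaces.  Suppose the un-confined ranks of admissible chains of submodules of
`M` are uniformly bounded by some `ℓ : ℕ`.  If `M` admits an admissible chain of submodules,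
then there are `k₀ : ℕ` and an admissible chain `C` of submodules of `M` such that `C` is
tail-`k₀`-confined. -/
theorem stmt_1 [IsLieAbelian ↥H] [DecidableEq (↥H →ₗ[k] k)]
    (hM : DirectSum.IsInternal fun μ : ↥H →ₗ[k] k => wtSpace k g H M μ)
    (ℓ : ℕ)
    (hbound : ∀ C : AdmissibleChain k g H M, unconfinedRank k g H Hdot M C ≤ (ℓ : ℕ∞))
    (hex : Nonempty (AdmissibleChain k g H M)) :
    ∃ (k₀ : ℕ) (C : AdmissibleChain k g H M), IsTailNConfined k g H Hdot M C k₀ := by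
  classical
  obtain ⟨C₀⟩ := hex
  have hne : ∀ C : AdmissibleChain k g H M, unconfinedRank k g H Hdot M C ≠ ⊤ := fun C =>
    ne_top_of_le_ne_top (by simp) (hbound C)
  set P : ℕ → Prop := fun n => ∃ C : AdmissibleChain k g H M,
    unconfinedRank k g H Hdot M C = (n : ℕ∞) with hPdef
  have hcoe : ∀ C : AdmissibleChain k g H M,
      unconfinedRank k g H Hdot M C = ((unconfinedRank k g H Hdot M C).toNat : ℕ∞) :=
    fun C => (ENat.coe_toNat (hne C)).symm
  have htoNat_le : ∀ C : AdmissibleChain k g H M,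
      (unconfinedRank k g H Hdot M C).toNat ≤ ℓ := by
    intro C
    have h1 := hbound C
    rw [hcoe C] at h1
    exact_mod_cast h1
  set r := Nat.findGreatest P ℓ with hr
  have hP0 : P ((unconfinedRank k g H Hdot M C₀).toNat) := ⟨C₀, hcoe C₀⟩
  have hPr : P r := Nat.findGreatest_spec (htoNat_le C₀) hP0
  obtain ⟨Cmax, hCmax⟩ := hPr
  have hmax : ∀ C : AdmissibleChain k g H M, unconfinedRank k g H Hdot M C ≤ (r : ℕ∞) := by
    intro C
    rw [hcoe C]
    have hPC : P ((unconfinedRank k g H Hdot M C).toNat) := ⟨C, hcoe C⟩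
    exact_mod_cast Nat.le_findGreatest (htoNat_le C) hPC
  set S : Set ℕ := {i : ℕ | ¬ QuotConfined k g H Hdot M (Cmax.Mseq i) (Cmax.Nseq i)} with hS
  have hSenc : S.encard = (r : ℕ∞) := hCmax
  have hSfin : S.Finite := Set.finite_of_encard_eq_coe hSenc
  obtain ⟨b, hb⟩ := hSfin.bddAbove
  refine ⟨b + 1, Cmax, ?_⟩
  intro C' hext i hi
  by_contra hnc
  have hiS : i ∉ S := by
    intro hmem
    have := hb hmem
    omega
  have hsub : insert i S ⊆ {j : ℕ | ¬ QuotConfined k g H Hdot M (C'.Mseq j) (C'.Nseq j)} := by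
    intro j hj
    rcases hj with rfl | hj
    · exact hnc
    · have hjb : j < b + 1 := Nat.lt_succ_of_le (hb hj)
      obtain ⟨hMeq, hNeq⟩ := hext j hjb
      simpa [hS, Set.mem_setOf_eq, hMeq, hNeq] using hj
  have h1 : (insert i S).encard ≤ unconfinedRank k g H Hdot M C' :=
    Set.encard_le_encard hsub
  rw [Set.encard_insert_of_notMem hiS, hSenc] at h1
  have h2 := le_trans h1 (hmax C')
  have : (r : ℕ∞) + 1 ≤ (r : ℕ∞) := h2
  simp [ENat.add_one_le_iff] at this
end

section
/- Let A be a unital associative ring and f ∈ A an element such that the inner derivation ad(f) : a ↦ f·a − a·f is locally nilpotent on A, i.e. for every a ∈ A there exists N ∈ ℕ with ad(f)^N(a) = 0. Then for every u ∈ A and every n ∈ ℕ there exist m ∈ ℕ and v ∈ A such that u·f^m = f^n·v; that is, u·f^m ∈ f^n·A. -/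
/-- If `A` is a unital associative ring and `f ∈ A` is such that the inner
derivation `ad(f) : a ↦ f*a - a*f` is locally nilpotent on `A`, then for every `u ∈ A` and
`n ∈ ℕ` there exist `m ∈ ℕ` and `v ∈ A` with `u * f^m = f^n * v`, i.e. `u * f^m ∈ f^n * A`. -/
theorem stmt_2 (A : Type*) [Ring A] (f : A)
    (hnil : ∀ a : A, ∃ N : ℕ, (fun x => f * x - x * f)^[N] a = 0) :
    ∀ (u : A) (n : ℕ), ∃ (m : ℕ) (v : A), u * f ^ m = f ^ n * v := by
  have key : ∀ (N : ℕ) (u : A), (fun x => f * x - x * f)^[N] u = 0 →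
      ∀ n : ℕ, ∃ (m : ℕ) (v : A), u * f ^ m = f ^ n * v := by
    intro N
    induction N with
    | zero =>
      intro u h n
      simp only [Function.iterate_zero, id_eq] at h
      exact ⟨0, 0, by simp [h]⟩
    | succ N ih =>
      intro u hu n
      induction n with
      | zero => exact ⟨0, u, by simp⟩
      | succ n ihn =>
        obtain ⟨m₀, v₀, h₀⟩ := ihn
        have hdu : (fun x => f * x - x * f)^[N] (f * u - u * f) = 0 := by
          have := hu
          rw [Function.iterate_succ_apply] at this
          exact this
        obtain ⟨m₁, v₁, h₁⟩ := ih (f * u - u * f) hdu (n + 1)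
        set M := max m₀ m₁ with hM
        have e₀ : u * f ^ M = f ^ n * (v₀ * f ^ (M - m₀)) := by
          have : M = m₀ + (M - m₀) := (Nat.add_sub_cancel' (le_max_left m₀ m₁)).symm
          rw [this, pow_add, ← mul_assoc, h₀, mul_assoc]; simp
        have e₁ : (f * u - u * f) * f ^ M = f ^ (n + 1) * (v₁ * f ^ (M - m₁)) := by
          have : M = m₁ + (M - m₁) := (Nat.add_sub_cancel' (le_max_right m₀ m₁)).symm
          rw [this, pow_add, ← mul_assoc, h₁, mul_assoc]; simp
        refine ⟨M + 1, v₀ * f ^ (M - m₀) - v₁ * f ^ (M - m₁), ?_⟩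
        calc u * f ^ (M + 1)
            = f * (u * f ^ M) - (f * u - u * f) * f ^ M := by
              rw [pow_succ']; noncomm_ring
          _ = f * (f ^ n * (v₀ * f ^ (M - m₀))) - f ^ (n + 1) * (v₁ * f ^ (M - m₁)) := by
              rw [e₀, e₁]
          _ = f ^ (n + 1) * (v₀ * f ^ (M - m₀) - v₁ * f ^ (M - m₁)) := by
              rw [mul_sub, ← mul_assoc, ← pow_succ']
  intro u n
  obtain ⟨N, hN⟩ := hnil u
  exact key N u hN n
end

section
/- Let A be a unital associative ring and f ∈ A a regular element (f·a = 0 implies a = 0, and a·f = 0 implies a = 0) such that ad(f) is locally nilpotent on A. Then S = {f^n : n ∈ ℕ} is a multiplicative set of regular elements of A satisfying the Ore condition: for every u ∈ A and s ∈ S there exist t ∈ S and v ∈ A with u·t = s·v. Consequently the Ore localization S⁻¹A exists, and the canonical ring homomorphism A → S⁻¹A is injective. -/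
open OreLocalization

section Aux

variable {A : Type*} [Ring A] {f : A}

private lemma aux_key1 (N : ℕ) : ∀ u : A, (fun x => f * x - x * f)^[N] u = 0 →
    ∃ v : A, u * f ^ N = f * v := by
  induction N with
  | zero =>
    intro u hu
    simp only [Function.iterate_zero, id_eq] at hu
    exact ⟨0, by simp [hu]⟩
  | succ N ih =>
    intro u hu
    rw [Function.iterate_succ_apply] at hu
    obtain ⟨w, hw⟩ := ih _ hu
    refine ⟨u * f ^ N - w, ?_⟩
    have h1 : u * f ^ (N + 1) = (u * f) * f ^ N := by
      rw [pow_succ', ← mul_assoc]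
    have h2 : u * f = f * u - (f * u - u * f) := by abel
    rw [h1, h2, sub_mul, mul_assoc, hw, ← mul_sub]

private lemma aux_key2 (N : ℕ) : ∀ u : A, (fun x => f * x - x * f)^[N] u = 0 →
    ∃ v : A, f ^ N * u = v * f := by
  induction N with
  | zero =>
    intro u hu
    simp only [Function.iterate_zero, id_eq] at hu
    exact ⟨0, by simp [hu]⟩
  | succ N ih =>
    intro u hu
    rw [Function.iterate_succ_apply] at hu
    obtain ⟨w, hw⟩ := ih _ hu
    refine ⟨f ^ N * u + w, ?_⟩
    have h1 : f ^ (N + 1) * u = f ^ N * (f * u) := by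
      rw [pow_succ, mul_assoc]
    have h2 : f * u = u * f + (f * u - u * f) := by abel
    rw [h1, h2, mul_add, ← mul_assoc, hw, ← add_mul]

private lemma aux_ore_left (hnil : ∀ a : A, ∃ N : ℕ, (fun x => f * x - x * f)^[N] a = 0)
    (n : ℕ) : ∀ u : A, ∃ m : ℕ, ∃ v : A, u * f ^ m = f ^ n * v := by
  induction n with
  | zero => intro u; exact ⟨0, u, by simp⟩
  | succ n ih =>
    intro u
    obtain ⟨m, v, hv⟩ := ih u
    obtain ⟨N, hN⟩ := hnil v
    obtain ⟨w, hw⟩ := aux_key1 N v hN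
    refine ⟨m + N, w, ?_⟩
    rw [pow_add, ← mul_assoc, hv, mul_assoc, hw, ← mul_assoc, ← pow_succ, pow_succ', mul_assoc]

private lemma aux_ore_right (hnil : ∀ a : A, ∃ N : ℕ, (fun x => f * x - x * f)^[N] a = 0)
    (n : ℕ) : ∀ u : A, ∃ m : ℕ, ∃ v : A, f ^ m * u = v * f ^ n := by
  induction n with
  | zero => intro u; exact ⟨0, u, by simp⟩
  | succ n ih =>
    intro u
    obtain ⟨m, v, hv⟩ := ih u
    obtain ⟨N, hN⟩ := hnil v
    obtain ⟨w, hw⟩ := aux_key2 N v hN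
    refine ⟨N + m, w, ?_⟩
    rw [pow_add, mul_assoc, hv, ← mul_assoc, hw, mul_assoc, ← pow_succ', pow_succ]

end Aux

/-- Let `A` be a unital associative ring and `f ∈ A` a regular element
(`f*a = 0 → a = 0` and `a*f = 0 → a = 0`) such that `ad(f)` is locally nilpotent on `A`.
Then `S = {f^n : n ∈ ℕ}` is a multiplicative set of regular elements of `A` satisfying the
Ore condition (for every `u ∈ A` and `s ∈ S` there are `t ∈ S` and `v ∈ A` with
`u * t = s * v`); consequently the Ore localization `S⁻¹A` exists and the canonical ring
homomorphism `A → S⁻¹A` is injective. -/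
theorem stmt_3 (A : Type*) [Ring A] (f : A)
    (hreg : ∀ a : A, (f * a = 0 → a = 0) ∧ (a * f = 0 → a = 0))
    (hnil : ∀ a : A, ∃ N : ℕ, (fun x => f * x - x * f)^[N] a = 0) :
    (∀ s ∈ Submonoid.powers f, ∀ a : A, (s * a = 0 → a = 0) ∧ (a * s = 0 → a = 0)) ∧
    (∀ u : A, ∀ s ∈ Submonoid.powers f,
      ∃ t ∈ Submonoid.powers f, ∃ v : A, u * t = s * v) ∧
    (∃ inst : OreSet (Submonoid.powers f),
      letI := inst
      Function.Injective
        (OreLocalization.numeratorRingHom : A →+* OreLocalization (Submonoid.powers f) A)) := by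
  -- regularity of powers of f
  have hpowreg : ∀ n : ℕ, ∀ a : A, (f ^ n * a = 0 → a = 0) ∧ (a * f ^ n = 0 → a = 0) := by
    intro n
    induction n with
    | zero => intro a; simp
    | succ n ih =>
      intro a
      constructor
      · intro h
        rw [pow_succ, mul_assoc] at h
        exact (hreg a).1 ((ih (f * a)).1 h)
      · intro h
        rw [pow_succ, ← mul_assoc] at h
        exact (ih a).2 ((hreg (a * f ^ n)).2 h)
  have hSreg : ∀ s ∈ Submonoid.powers f, ∀ a : A,
      (s * a = 0 → a = 0) ∧ (a * s = 0 → a = 0) := by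
    rintro s ⟨n, rfl⟩ a
    exact hpowreg n a
  refine ⟨hSreg, ?_, ?_⟩
  · rintro u s ⟨n, rfl⟩
    obtain ⟨m, v, hv⟩ := aux_ore_left hnil n u
    exact ⟨f ^ m, ⟨m, rfl⟩, v, hv⟩
  · -- Ore set instance
    have hOre : ∀ (r : A) (s : Submonoid.powers f),
        ∃ (r' : A) (s' : Submonoid.powers f), (s' : A) * r = r' * (s : A) := by
      rintro r ⟨s, n, rfl⟩
      obtain ⟨m, v, hv⟩ := aux_ore_right hnil n r
      exact ⟨v, ⟨f ^ m, m, rfl⟩, hv⟩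
    have hcancel : ∀ (r₁ r₂ : A) (s : Submonoid.powers f), r₁ * s = r₂ * s →
        ∃ s' : Submonoid.powers f, (s' : A) * r₁ = (s' : A) * r₂ := by
      intro r₁ r₂ s h
      refine ⟨1, ?_⟩
      have := (hSreg s s.2 (r₁ - r₂)).2 (by rw [sub_mul, h, sub_self])
      simp [sub_eq_zero.mp this]
    obtain ⟨inst⟩ := OreLocalization.nonempty_oreSet_iff.mpr ⟨hcancel, hOre⟩
    refine ⟨inst, ?_⟩
    have hS : Submonoid.powers f ≤ nonZeroDivisorsLeft A := by
      rintro s hs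
      rw [mem_nonZeroDivisorsLeft_iff]
      intro y hy
      exact (hSreg s hs y).1 hy
    exact OreLocalization.numeratorHom_inj hS
end

section
/- Let k be a commutative ring, L a Lie algebra over k, and f ∈ L an element such that ad(f) : L → L, x ↦ [f, x], is locally nilpotent. Then the inner derivation of the universal enveloping algebra U(L) given by u ↦ ι(f)·u − u·ι(f) is locally nilpotent on U(L), where ι : L → U(L) is the canonical map. -/
open Finset Nat

section Aux

variable {A : Type*} [Ring A]

/-- Iterated Leibniz rule for the inner derivation `v ↦ a*v - v*a`. -/
lemma inner_der_iterate_mul (a : A) (n : ℕ) (x y : A) :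
    (fun v => a * v - v * a)^[n] (x * y) =
      ∑ ij ∈ antidiagonal n, n.choose ij.1 •
        ((fun v => a * v - v * a)^[ij.1] x * (fun v => a * v - v * a)^[ij.2] y) := by
  set E : A →ₗ[ℤ] A := LinearMap.mulLeft ℤ a - LinearMap.mulRight ℤ a with hE
  have hEc : (fun v => a * v - v * a) = ⇑E := by
    funext v; simp [hE]
  have hleib : ∀ u v : A, E (u * v) = E u * v + u * E v := by
    intro u v; simp only [hE, LinearMap.sub_apply, LinearMap.mulLeft_apply,
      LinearMap.mulRight_apply]; noncomm_ring
  rw [hEc]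
  induction n with
  | zero => simp
  | succ n ih =>
    rw [sum_antidiagonal_choose_succ_nsmul (M := A)
      (fun i j => (⇑E)^[i] x * (⇑E)^[j] y) n]
    simp only [Function.iterate_succ_apply', ih, map_sum, map_nsmul, hleib, smul_add,
      sum_add_distrib]
    rw [add_comm]
    congr 1
    refine sum_congr rfl fun ij hij ↦ ?_
    rw [Nat.choose_symm_of_eq_add (Finset.HasAntidiagonal.mem_antidiagonal.1 hij).symm]

lemma inner_der_iterate_zero (a : A) (n : ℕ) :
    (fun v => a * v - v * a)^[n] (0 : A) = 0 :=
  Function.iterate_fixed (by simp) n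

lemma inner_der_iterate_add (a : A) (n : ℕ) (x y : A) :
    (fun v => a * v - v * a)^[n] (x + y) =
      (fun v => a * v - v * a)^[n] x + (fun v => a * v - v * a)^[n] y := by
  induction n generalizing x y with
  | zero => simp
  | succ n ih => simp only [Function.iterate_succ_apply, ← ih]; congr 1; noncomm_ring

end Aux

/-- Let `k` be a commutative ring, `L` a Lie algebra over `k`, and `f ∈ L`
such that `ad(f) : x ↦ ⁅f, x⁆` is locally nilpotent on `L`.  Then the inner derivation
`u ↦ ι(f) * u - u * ι(f)` of the universal enveloping algebra `U(L)` is locally nilpotent,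
where `ι : L → U(L)` is the canonical map. -/
theorem stmt_5 (k : Type*) [CommRing k] (L : Type*) [LieRing L] [LieAlgebra k L]
    (f : L) (hnil : ∀ x : L, ∃ N : ℕ, (fun y => ⁅f, y⁆)^[N] x = 0) :
    ∀ u : UniversalEnvelopingAlgebra k L, ∃ N : ℕ,
      (fun v => (UniversalEnvelopingAlgebra.ι k f) * v
        - v * (UniversalEnvelopingAlgebra.ι k f))^[N] u = 0 := by
  set A := UniversalEnvelopingAlgebra k L
  set F : A := UniversalEnvelopingAlgebra.ι k f with hF
  set d : A → A := fun v => F * v - v * F with hd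
  -- d vanishes eventually on ι x for all x
  have hι : ∀ (n : ℕ) (x : L),
      d^[n] (UniversalEnvelopingAlgebra.ι k x) =
        UniversalEnvelopingAlgebra.ι k ((fun y => ⁅f, y⁆)^[n] x) := by
    intro n
    induction n with
    | zero => intro x; simp
    | succ n ih =>
      intro x
      rw [Function.iterate_succ_apply, Function.iterate_succ_apply]
      rw [← ih ⁅f, x⁆]
      congr 1
      letI : LieRing A := LieRing.ofAssociativeRing
      have : UniversalEnvelopingAlgebra.ι k ⁅f, x⁆ =
          ⁅UniversalEnvelopingAlgebra.ι k f, UniversalEnvelopingAlgebra.ι k x⁆ :=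
        LieHom.map_lie _ _ _
      rw [this, Ring.lie_def]
  -- the key stability statements
  have hzero : ∀ n : ℕ, d^[n] (0 : A) = 0 := fun n => inner_der_iterate_zero F n
  have habs : ∀ (m n : ℕ) (x : A), m ≤ n → d^[m] x = 0 → d^[n] x = 0 := by
    intro m n x hmn h
    rw [← Nat.sub_add_cancel hmn, Function.iterate_add_apply, h, hzero]
  -- main induction over the tensor algebra
  intro u
  obtain ⟨t, rfl⟩ := (show Function.Surjective (UniversalEnvelopingAlgebra.mkAlgHom k L) from
    RingCon.mkₐ_surjective (α := k) (UniversalEnvelopingAlgebra.ringCon k L)) u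
  induction t using TensorAlgebra.induction with
  | algebraMap r =>
      refine ⟨1, ?_⟩
      simp only [Function.iterate_one, hd, AlgHom.commutes]
      exact sub_eq_zero.mpr (Algebra.commutes r F).symm
  | ι x =>
      obtain ⟨N, hN⟩ := hnil x
      refine ⟨N, ?_⟩
      have : (UniversalEnvelopingAlgebra.mkAlgHom k L)
          ((TensorAlgebra.ι k) x) = UniversalEnvelopingAlgebra.ι k x := rfl
      rw [this, hι N x, hN]
      exact (UniversalEnvelopingAlgebra.ι k).map_zero
  | mul a b ha hb =>
      obtain ⟨M, hM⟩ := ha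
      obtain ⟨N, hN⟩ := hb
      refine ⟨M + N, ?_⟩
      rw [map_mul, hd, inner_der_iterate_mul F]
      refine Finset.sum_eq_zero fun ⟨i, j⟩ hij ↦ ?_
      have hij' : i + j = M + N := Finset.HasAntidiagonal.mem_antidiagonal.1 hij
      rcases le_or_gt M i with h | h
      · rw [habs M i _ h hM, zero_mul, smul_zero]
      · have : N ≤ j := by omega
        rw [habs N j _ this hN, mul_zero, smul_zero]
  | add a b ha hb =>
      obtain ⟨M, hM⟩ := ha
      obtain ⟨N, hN⟩ := hb
      refine ⟨M + N, ?_⟩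
      rw [map_add, hd, inner_der_iterate_add, ← hd,
        habs M (M + N) _ (Nat.le_add_right _ _) hM,
        habs N (M + N) _ (Nat.le_add_left _ _) hN, add_zero]
end

section
/- Let k be a field of characteristic zero, B a unital associative k-algebra, and f ∈ B a unit such that ad(f) is locally nilpotent on B. For x ∈ k define Θ^x : B → B by Θ^x(u) = Σ_{i≥0} C(x,i)·(ad f)^i(u)·f^{−i}, where C(x,0) = 1 and C(x,i) = x(x−1)⋯(x−i+1)/i! for i ≥ 1; by local nilpotency this sum is finite for each u. Then Θ^x is a unital k-algebra endomorphism of B: it is k-linear, multiplicative, and Θ^x(1) = 1. -/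
/-- The generalized binomial coefficient `C(x, i) = x(x-1)⋯(x-i+1)/i!` of a field element
`x` (with `C(x, 0) = 1`). -/
noncomputable def genBinom (k : Type*) [Field k] (x : k) (i : ℕ) : k :=
  (∏ j ∈ Finset.range i, (x - (j : k))) / (Nat.factorial i : k)

set_option linter.unusedSectionVars false

namespace Stmt8Aux

open Finset Polynomial

section binom

variable {k : Type*} [Field k] [CharZero k]

lemma genBinom_zero (x : k) : genBinom k x 0 = 1 := by simp [genBinom]

lemma genBinom_cast_zero_succ (i : ℕ) : genBinom k (0 : k) (i + 1) = 0 := by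
  unfold genBinom
  rw [Finset.prod_eq_zero (Finset.mem_range.2 (Nat.succ_pos i)) (by simp)]
  simp

lemma genBinom_pascal (x : k) (i : ℕ) :
    genBinom k x i + genBinom k x (i + 1) = genBinom k (x + 1) (i + 1) := by
  unfold genBinom
  have h1 : (Nat.factorial i : k) ≠ 0 := Nat.cast_ne_zero.2 i.factorial_ne_zero
  have h2 : ((i : k) + 1) ≠ 0 := by
    have : ((i + 1 : ℕ) : k) ≠ 0 := Nat.cast_ne_zero.2 (Nat.succ_ne_zero i)
    push_cast at this; exact this
  rw [Finset.prod_range_succ, Finset.prod_range_succ' (fun j => x + 1 - (j : k)) i]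
  have h3 : (∏ j ∈ Finset.range i, (x + 1 - ((j + 1 : ℕ) : k)))
      = ∏ j ∈ Finset.range i, (x - (j : k)) := by
    refine Finset.prod_congr rfl fun j _ => ?_
    push_cast; ring
  rw [h3, Nat.factorial_succ]
  push_cast
  field_simp
  ring

/-- The polynomial whose evaluation is `genBinom`. -/
noncomputable def binomPoly (k : Type*) [Field k] (i : ℕ) : Polynomial k :=
  Polynomial.C ((Nat.factorial i : k)⁻¹) *
    ∏ j ∈ Finset.range i, (Polynomial.X - Polynomial.C (j : k))

lemma binomPoly_eval (x : k) (i : ℕ) : (binomPoly k i).eval x = genBinom k x i := by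
  simp [binomPoly, genBinom, Polynomial.eval_prod, div_eq_mul_inv, mul_comm]

/-- Polynomial-coefficient vector-valued functions vanishing on ℕ vanish everywhere. -/
lemma poly_vanish {B : Type*} [AddCommGroup B] [Module k B]
    {ι : Type*} (s : Finset ι) (P : ι → Polynomial k) (b : ι → B)
    (h : ∀ n : ℕ, ∑ t ∈ s, (P t).eval ((n : ℕ) : k) • b t = 0) (x : k) :
    ∑ t ∈ s, (P t).eval x • b t = 0 := by
  rw [← Module.forall_dual_apply_eq_zero_iff k]
  intro φ
  have hq : (∑ t ∈ s, φ (b t) • P t) = 0 := by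
    apply Polynomial.eq_zero_of_infinite_isRoot
    apply Set.Infinite.mono (s := Set.range (Nat.cast : ℕ → k))
      (t := {y | Polynomial.IsRoot _ y})
    · rintro _ ⟨n, rfl⟩
      have := congrArg φ (h n)
      simp only [map_sum, map_smul, map_zero, smul_eq_mul] at this
      simp only [Set.mem_setOf_eq, Polynomial.IsRoot, Polynomial.eval_finset_sum,
        Polynomial.eval_smul, smul_eq_mul]
      rw [← this]
      exact Finset.sum_congr rfl fun t _ => mul_comm _ _
    · exact Set.infinite_range_of_injective Nat.cast_injective
  have := congrArg (Polynomial.eval x) hq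
  simp only [Polynomial.eval_finset_sum, Polynomial.eval_smul, smul_eq_mul,
    Polynomial.eval_zero] at this
  rw [map_sum]
  rw [← this]
  exact Finset.sum_congr rfl fun t _ => by rw [map_smul, smul_eq_mul, mul_comm]

end binom

section ring

variable {k : Type*} [Field k] [CharZero k] {B : Type*} [Ring B] [Algebra k B]

/-- The inner derivation `ad f`. -/
def d (f : B) : B → B := fun a => f * a - a * f

variable (f : Bˣ)

lemma d_zero : d (f : B) 0 = 0 := by simp [d]

lemma d_add (a b : B) : d (f : B) (a + b) = d (f : B) a + d (f : B) b := by
  simp only [d]; noncomm_ring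

lemma d_smul (c : k) (a : B) : d (f : B) (c • a) = c • d (f : B) a := by
  simp only [d, mul_smul_comm, smul_mul_assoc, smul_sub]

lemma iter_zero (n : ℕ) : (d (f : B))^[n] 0 = 0 :=
  Function.iterate_fixed (d_zero f) n

lemma iter_add (n : ℕ) (a b : B) :
    (d (f : B))^[n] (a + b) = (d (f : B))^[n] a + (d (f : B))^[n] b := by
  induction n with
  | zero => rfl
  | succ m ih => simp only [Function.iterate_succ_apply', ih, d_add]

lemma iter_smul (n : ℕ) (c : k) (a : B) :
    (d (f : B))^[n] (c • a) = c • (d (f : B))^[n] a := by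
  induction n with
  | zero => rfl
  | succ m ih => simp only [Function.iterate_succ_apply', ih, d_smul]

lemma iter_eq_zero {u : B} {N : ℕ} (h : (d (f : B))^[N] u = 0) {i : ℕ} (hi : N ≤ i) :
    (d (f : B))^[i] u = 0 := by
  obtain ⟨m, rfl⟩ := Nat.exists_eq_add_of_le hi
  rw [add_comm, Function.iterate_add_apply, h, iter_zero]

/-- The truncated sum defining `Θ^x` with truncation bound `N`. -/
noncomputable def S (x : k) (N : ℕ) (u : B) : B :=
  ∑ i ∈ Finset.range N, genBinom k x i • ((d (f : B))^[i] u * ((f⁻¹ : Bˣ) : B) ^ i)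

lemma S_indep (x : k) {u : B} {N M : ℕ} (h : (d (f : B))^[N] u = 0) (hNM : N ≤ M) :
    S f x M u = S f x N u := by
  refine (Finset.sum_subset (Finset.range_subset_range.2 hNM) fun i _ hi => ?_).symm
  rw [iter_eq_zero f h (le_of_not_gt (fun hlt => hi (Finset.mem_range.2 hlt))), zero_mul,
    smul_zero]

lemma S_eq (x : k) {u : B} {N M : ℕ} (hN : (d (f : B))^[N] u = 0)
    (hM : (d (f : B))^[M] u = 0) : S f x N u = S f x M u := by
  rw [← S_indep f x hN (le_max_left N M), ← S_indep f x hM (le_max_right N M)]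

lemma f_mul_g_pow_succ (i : ℕ) :
    (f : B) * ((f⁻¹ : Bˣ) : B) ^ (i + 1) = ((f⁻¹ : Bˣ) : B) ^ i := by
  rw [pow_succ', ← mul_assoc, f.mul_inv, one_mul]

lemma g_pow_mul_f_pow (n : ℕ) :
    ((f⁻¹ : Bˣ) : B) ^ n * (f : B) ^ n = 1 := by
  rw [← Units.val_pow_eq_pow_val, ← Units.val_pow_eq_pow_val, ← Units.val_mul, inv_pow,
    inv_mul_cancel, Units.val_one]

lemma step_term (i : ℕ) (y : B) :
    (f : B) * (y * ((f⁻¹ : Bˣ) : B) ^ i) * ((f⁻¹ : Bˣ) : B)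
      = d (f : B) y * ((f⁻¹ : Bˣ) : B) ^ (i + 1) + y * ((f⁻¹ : Bˣ) : B) ^ i := by
  have hd : (f : B) * y = d (f : B) y + y * (f : B) := by simp [d]
  have h1 : (f : B) * (y * ((f⁻¹ : Bˣ) : B) ^ i) * ((f⁻¹ : Bˣ) : B)
      = ((f : B) * y) * ((f⁻¹ : Bˣ) : B) ^ (i + 1) := by
    rw [pow_succ]; simp [mul_assoc]
  rw [h1, hd, add_mul, mul_assoc y, f_mul_g_pow_succ]

lemma S_natCast (n : ℕ) {w : B} {N : ℕ} (h : (d (f : B))^[N] w = 0) :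
    S f ((n : ℕ) : k) N w = (f : B) ^ n * w * ((f⁻¹ : Bˣ) : B) ^ n := by
  induction n with
  | zero =>
    simp only [Nat.cast_zero, pow_zero, one_mul, mul_one]
    cases N with
    | zero =>
      have hw : w = 0 := by simpa using h
      simp [S, hw]
    | succ m =>
      rw [S, Finset.sum_eq_single 0]
      · simp [genBinom_zero]
      · intro i _ hi
        obtain ⟨j, rfl⟩ := Nat.exists_eq_succ_of_ne_zero hi
        rw [genBinom_cast_zero_succ, zero_smul]
      · intro habs
        exact absurd (Finset.mem_range.2 (Nat.succ_pos m)) habs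
  | succ n ih =>
    have hcast : (((n + 1 : ℕ)) : k) = ((n : ℕ) : k) + 1 := by push_cast; ring
    have hrhs : (f : B) ^ (n + 1) * w * ((f⁻¹ : Bˣ) : B) ^ (n + 1)
        = (f : B) * ((f : B) ^ n * w * ((f⁻¹ : Bˣ) : B) ^ n) * ((f⁻¹ : Bˣ) : B) := by
      rw [pow_succ' (f : B), pow_succ ((f⁻¹ : Bˣ) : B)]
      simp [mul_assoc]
    rw [hcast, hrhs, ← ih]
    conv_rhs => rw [S, Finset.mul_sum, Finset.sum_mul]
    have hterm : ∀ i,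
        (f : B) * (genBinom k ((n : ℕ) : k) i • ((d (f : B))^[i] w * ((f⁻¹ : Bˣ) : B) ^ i))
            * ((f⁻¹ : Bˣ) : B)
        = genBinom k ((n : ℕ) : k) i • ((d (f : B))^[i + 1] w * ((f⁻¹ : Bˣ) : B) ^ (i + 1))
          + genBinom k ((n : ℕ) : k) i • ((d (f : B))^[i] w * ((f⁻¹ : Bˣ) : B) ^ i) := by
      intro i
      rw [mul_smul_comm, smul_mul_assoc, step_term, smul_add, Function.iterate_succ_apply']
    rw [Finset.sum_congr rfl fun i _ => hterm i, Finset.sum_add_distrib]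
    set G : ℕ → B := fun i =>
      (if i = 0 then (0 : k) else genBinom k ((n : ℕ) : k) (i - 1)) •
        ((d (f : B))^[i] w * ((f⁻¹ : Bˣ) : B) ^ i) with hG
    have hsum1 : (∑ i ∈ Finset.range N,
        genBinom k ((n : ℕ) : k) i • ((d (f : B))^[i + 1] w * ((f⁻¹ : Bˣ) : B) ^ (i + 1)))
        = ∑ i ∈ Finset.range (N + 1), G i := by
      rw [Finset.sum_range_succ' G N]
      have hG0 : G 0 = 0 := by simp [hG]
      have hGs : ∀ i, G (i + 1)
          = genBinom k ((n : ℕ) : k) i • ((d (f : B))^[i + 1] w * ((f⁻¹ : Bˣ) : B) ^ (i + 1)) := by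
        intro i; simp [hG]
      rw [hG0, add_zero, Finset.sum_congr rfl fun i _ => hGs i]
    have hsum2 : (∑ i ∈ Finset.range N,
        genBinom k ((n : ℕ) : k) i • ((d (f : B))^[i] w * ((f⁻¹ : Bˣ) : B) ^ i))
        = ∑ i ∈ Finset.range (N + 1),
            genBinom k ((n : ℕ) : k) i • ((d (f : B))^[i] w * ((f⁻¹ : Bˣ) : B) ^ i) := by
      rw [Finset.sum_range_succ, h, zero_mul, smul_zero, add_zero]
    have hlhs : S f (((n : ℕ) : k) + 1) N w
        = ∑ i ∈ Finset.range (N + 1),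
            genBinom k (((n : ℕ) : k) + 1) i • ((d (f : B))^[i] w * ((f⁻¹ : Bˣ) : B) ^ i) := by
      rw [S]
      rw [Finset.sum_range_succ, h, zero_mul, smul_zero, add_zero]
    rw [show S f (((n : ℕ) : k) + 1) N w = _ from rfl] at hlhs
    rw [hlhs, hsum1, hsum2, ← Finset.sum_add_distrib]
    refine Finset.sum_congr rfl fun i _ => ?_
    cases i with
    | zero => simp [hG, genBinom_zero]
    | succ m =>
      have hGs : G (m + 1)
          = genBinom k ((n : ℕ) : k) m • ((d (f : B))^[m + 1] w * ((f⁻¹ : Bˣ) : B) ^ (m + 1)) := by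
        simp [hG]
      rw [hGs, ← add_smul, genBinom_pascal]

lemma S_mul_natCast (n : ℕ) {u v : B} {N M L : ℕ}
    (hu : (d (f : B))^[N] u = 0) (hv : (d (f : B))^[M] v = 0)
    (huv : (d (f : B))^[L] (u * v) = 0) :
    S f ((n : ℕ) : k) L (u * v) = S f ((n : ℕ) : k) N u * S f ((n : ℕ) : k) M v := by
  rw [S_natCast f n hu, S_natCast f n hv, S_natCast f n huv]
  have hmid : (f : B) ^ n * u * ((f⁻¹ : Bˣ) : B) ^ n * ((f : B) ^ n * v * ((f⁻¹ : Bˣ) : B) ^ n)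
      = (f : B) ^ n * u * (((f⁻¹ : Bˣ) : B) ^ n * (f : B) ^ n) * v * ((f⁻¹ : Bˣ) : B) ^ n := by
    simp [mul_assoc]
  rw [hmid, g_pow_mul_f_pow, mul_one]
  simp [mul_assoc]

lemma S_mul (x : k) {u v : B} {N M L : ℕ}
    (hu : (d (f : B))^[N] u = 0) (hv : (d (f : B))^[M] v = 0)
    (huv : (d (f : B))^[L] (u * v) = 0) :
    S f x L (u * v) = S f x N u * S f x M v := by
  classical
  set P : ℕ ⊕ ℕ × ℕ → Polynomial k :=
    Sum.elim (binomPoly k) (fun p => -(binomPoly k p.1 * binomPoly k p.2)) with hP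
  set b : ℕ ⊕ ℕ × ℕ → B :=
    Sum.elim (fun i => (d (f : B))^[i] (u * v) * ((f⁻¹ : Bˣ) : B) ^ i)
      (fun p => ((d (f : B))^[p.1] u * ((f⁻¹ : Bˣ) : B) ^ p.1)
        * ((d (f : B))^[p.2] v * ((f⁻¹ : Bˣ) : B) ^ p.2)) with hb
  set s : Finset (ℕ ⊕ ℕ × ℕ) :=
    (Finset.range L).disjSum ((Finset.range N) ×ˢ (Finset.range M)) with hs
  have hQ : ∀ y : k, (∑ t ∈ s, (P t).eval y • b t)
      = S f y L (u * v) - S f y N u * S f y M v := by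
    intro y
    rw [hs, Finset.sum_disjSum]
    have h1 : (∑ i ∈ Finset.range L, (P (Sum.inl i)).eval y • b (Sum.inl i))
        = S f y L (u * v) := by
      refine Finset.sum_congr rfl fun i _ => ?_
      simp [hP, hb, binomPoly_eval, S]
    have h2 : (∑ p ∈ (Finset.range N) ×ˢ (Finset.range M),
          (P (Sum.inr p)).eval y • b (Sum.inr p))
        = -(S f y N u * S f y M v) := by
      rw [S, S, Finset.sum_mul_sum, ← Finset.sum_neg_distrib]
      rw [Finset.sum_product]
      refine Finset.sum_congr rfl fun i _ => ?_
      rw [← Finset.sum_neg_distrib]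
      refine Finset.sum_congr rfl fun j _ => ?_
      simp only [hP, hb, Sum.elim_inr, Polynomial.eval_neg, Polynomial.eval_mul,
        binomPoly_eval, neg_smul, smul_mul_smul_comm, neg_inj]
    rw [h1, h2, ← sub_eq_add_neg]
  have hz : ∀ y : k, y ∈ Set.range (Nat.cast : ℕ → k) → True := fun _ _ => trivial
  have hnat : ∀ n : ℕ, (∑ t ∈ s, (P t).eval ((n : ℕ) : k) • b t) = 0 := by
    intro n
    rw [hQ, S_mul_natCast f n hu hv huv, sub_self]
  have := poly_vanish s P b hnat x
  rw [hQ x] at this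
  exact sub_eq_zero.1 this

end ring

end Stmt8Aux

/-- Let `k` be a field of characteristic zero, `B` a unital associative
`k`-algebra, and `f` a unit of `B` such that `ad(f)` is locally nilpotent on `B`.  For
`x ∈ k` the map `Θ^x : u ↦ Σ_{i ≥ 0} C(x,i) • ((ad f)^i(u) * f^{-i})` (a finite sum for each
`u` by local nilpotency) is a unital `k`-algebra endomorphism of `B`: there is a `k`-algebra
homomorphism `Θ : B →ₐ[k] B` given on each `u` by the indicated (truncated) sum. -/
theorem stmt_8 (k : Type*) [Field k] [CharZero k] (B : Type*) [Ring B] [Algebra k B]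
    (f : Bˣ)
    (hnil : ∀ u : B, ∃ N : ℕ, (fun a => (f : B) * a - a * (f : B))^[N] u = 0)
    (x : k) :
    ∃ Θ : B →ₐ[k] B, ∀ (u : B) (N : ℕ),
      (fun a => (f : B) * a - a * (f : B))^[N] u = 0 →
      Θ u = ∑ i ∈ Finset.range N,
        genBinom k x i •
          ((fun a => (f : B) * a - a * (f : B))^[i] u * ((f⁻¹ : Bˣ) : B) ^ i) := by
  classical
  open Stmt8Aux in
  have hnil' : ∀ u : B, ∃ N : ℕ, (Stmt8Aux.d (f : B))^[N] u = 0 := hnil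
  set Nn : B → ℕ := fun u => (hnil' u).choose with hNndef
  have hNn : ∀ u, (Stmt8Aux.d (f : B))^[Nn u] u = 0 := fun u => (hnil' u).choose_spec
  set T : B → B := fun u => Stmt8Aux.S f x (Nn u) u with hT
  have Tspec : ∀ (u : B) (N : ℕ), (Stmt8Aux.d (f : B))^[N] u = 0 →
      T u = Stmt8Aux.S f x N u := fun u N h => Stmt8Aux.S_eq f x (hNn u) h
  have Tone : T 1 = 1 := by
    have h1 : (Stmt8Aux.d (f : B))^[1] (1 : B) = 0 := by simp [Stmt8Aux.d]
    rw [Tspec 1 1 h1]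
    simp [Stmt8Aux.S, Stmt8Aux.genBinom_zero]
  have Tzero : T 0 = 0 := by
    have h0 : (Stmt8Aux.d (f : B))^[0] (0 : B) = 0 := rfl
    rw [Tspec 0 0 h0]; simp [Stmt8Aux.S]
  have Tadd : ∀ u v, T (u + v) = T u + T v := by
    intro u v
    set N := max (Nn u) (Nn v) with hN
    have hu : (Stmt8Aux.d (f : B))^[N] u = 0 :=
      Stmt8Aux.iter_eq_zero f (hNn u) (le_max_left _ _)
    have hv : (Stmt8Aux.d (f : B))^[N] v = 0 :=
      Stmt8Aux.iter_eq_zero f (hNn v) (le_max_right _ _)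
    have huv : (Stmt8Aux.d (f : B))^[N] (u + v) = 0 := by
      rw [Stmt8Aux.iter_add, hu, hv, add_zero]
    rw [Tspec (u + v) N huv, Tspec u N hu, Tspec v N hv]
    unfold Stmt8Aux.S
    rw [← Finset.sum_add_distrib]
    refine Finset.sum_congr rfl fun i _ => ?_
    rw [Stmt8Aux.iter_add, add_mul, smul_add]
  have Tmul : ∀ u v, T (u * v) = T u * T v := fun u v =>
    Stmt8Aux.S_mul f x (hNn u) (hNn v) (hNn (u * v))
  have Tsmul : ∀ (c : k) (u : B), T (c • u) = c • T u := by
    intro c u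
    have h : (Stmt8Aux.d (f : B))^[Nn u] (c • u) = 0 := by
      rw [Stmt8Aux.iter_smul, hNn u, smul_zero]
    rw [Tspec (c • u) (Nn u) h, show T u = Stmt8Aux.S f x (Nn u) u from rfl]
    unfold Stmt8Aux.S
    rw [Finset.smul_sum]
    refine Finset.sum_congr rfl fun i _ => ?_
    rw [Stmt8Aux.iter_smul, smul_mul_assoc, smul_comm]
  have R : B →+* B :=
    { toFun := T
      map_one' := Tone
      map_mul' := Tmul
      map_zero' := Tzero
      map_add' := Tadd }
  refine ⟨AlgHom.mk'
    ({ toFun := T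
       map_one' := Tone
       map_mul' := Tmul
       map_zero' := Tzero
       map_add' := Tadd } : B →+* B) Tsmul, ?_⟩
  intro u N h
  have h' : (Stmt8Aux.d (f : B))^[N] u = 0 := h
  exact Tspec u N h'
end

section
/- Let k be a field of characteristic zero, B a unital associative k-algebra, and f ∈ B a unit such that ad(f) is locally nilpotent on B. For x ∈ k let Θ^x : B → B be given by Θ^x(u) = Σ_{i≥0} C(x,i)·(ad f)^i(u)·f^{−i} (a finite sum for each u). Then Θ^0 is the identity of B and Θ^x ∘ Θ^y = Θ^{x+y} for all x, y ∈ k; in particular each Θ^x is a k-algebra automorphism of B with inverse Θ^{−x}. -/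
lemma descPoch_smeval_eq_prod {k : Type*} [Field k] (x : k) (i : ℕ) :
    (descPochhammer ℤ i).smeval x = ∏ j ∈ Finset.range i, (x - (j : k)) := by
  induction i with
  | zero => simp [Polynomial.smeval_one]
  | succ n ih =>
    rw [descPochhammer_succ_right, Polynomial.smeval_mul, ih, Finset.prod_range_succ]
    congr 1
    rw [Polynomial.smeval_sub, Polynomial.smeval_X, Polynomial.smeval_natCast]
    simp

lemma genBinom_eq_choose {k : Type*} [Field k] [CharZero k] (x : k) (i : ℕ) :
    genBinom k x i = Ring.choose x i := by
  have h := Ring.descPochhammer_eq_factorial_smul_choose (R := k) x i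
  rw [descPoch_smeval_eq_prod] at h
  have hf : (Nat.factorial i : k) ≠ 0 := Nat.cast_ne_zero.mpr (Nat.factorial_ne_zero i)
  rw [genBinom, h, nsmul_eq_mul, mul_div_cancel_left₀ _ hf]

lemma genBinom_zero' {k : Type*} [Field k] [CharZero k] (i : ℕ) (hi : 0 < i) :
    genBinom k (0 : k) i = 0 := by
  rw [genBinom, Finset.prod_eq_zero (Finset.mem_range.mpr hi) (by simp), zero_div]

lemma genBinom_zero_zero {k : Type*} [Field k] [CharZero k] :
    genBinom k (0 : k) 0 = 1 := by simp [genBinom]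

lemma genBinom_vandermonde {k : Type*} [Field k] [CharZero k] (x y : k) (n : ℕ) :
    genBinom k (x + y) n =
      ∑ ij ∈ Finset.HasAntidiagonal.antidiagonal n, genBinom k x ij.1 * genBinom k y ij.2 := by
  simp only [genBinom_eq_choose]
  exact Ring.add_choose_eq n (Commute.all x y)

/-- Convolution rearrangement for a sequence `T` vanishing from `N` on. -/
lemma conv_sum {k : Type*} [Field k] {B : Type*} [AddCommMonoid B] [Module k B]
    (N : ℕ) (a b : ℕ → k) (T : ℕ → B) (hT : ∀ n, N ≤ n → T n = 0) :
    ∑ j ∈ Finset.range N, ∑ i ∈ Finset.range N, (a i * b j) • T (i + j)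
      = ∑ n ∈ Finset.range N, (∑ ij ∈ Finset.HasAntidiagonal.antidiagonal n, a ij.1 * b ij.2) • T n := by
  classical
  set G : ℕ × ℕ → B := fun p => (a p.1 * b p.2) • T (p.1 + p.2) with hG
  have hL : ∑ j ∈ Finset.range N, ∑ i ∈ Finset.range N, (a i * b j) • T (i + j)
      = ∑ p ∈ Finset.range N ×ˢ Finset.range N, G p := by
    rw [Finset.sum_product]
    exact Finset.sum_comm
  have hR : ∀ n ∈ Finset.range N,
      (∑ ij ∈ Finset.HasAntidiagonal.antidiagonal n, a ij.1 * b ij.2) • T n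
        = ∑ p ∈ Finset.HasAntidiagonal.antidiagonal n, G p := by
    intro n hn
    rw [Finset.sum_smul]
    refine Finset.sum_congr rfl fun p hp => ?_
    rw [hG]
    simp only
    rw [Finset.HasAntidiagonal.mem_antidiagonal.mp hp]
  rw [hL, Finset.sum_congr rfl hR, ← Finset.sum_biUnion]
  · refine Finset.sum_subset ?_ ?_ |>.symm
    · intro p hp
      simp only [Finset.mem_biUnion, Finset.mem_range, Finset.HasAntidiagonal.mem_antidiagonal] at hp
      obtain ⟨n, hn, hpn⟩ := hp
      simp only [Finset.mem_product, Finset.mem_range]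
      omega
    · intro p hp hnp
      simp only [Finset.mem_product, Finset.mem_range] at hp
      simp only [Finset.mem_biUnion, Finset.mem_range, Finset.HasAntidiagonal.mem_antidiagonal] at hnp
      have : N ≤ p.1 + p.2 := by
        by_contra h
        exact hnp ⟨p.1 + p.2, by omega, rfl⟩
      simp [hG, hT _ this]
  · intro m hm n hn hmn
    refine Finset.disjoint_left.mpr fun p hpm hpn => ?_
    rw [Finset.HasAntidiagonal.mem_antidiagonal] at hpm hpn
    exact hmn (hpm ▸ hpn ▸ rfl)

/-- Let `k` be a field of characteristic zero, `B` a unital associative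
`k`-algebra, and `f` a unit of `B` with `ad(f)` locally nilpotent on `B`.  Let
`Θ : k → (B →ₐ[k] B)` be the family of twisting endomorphisms, i.e. for each `x ∈ k`,
`Θ x` is given by the finite sums `Θ x u = Σ_i C(x,i) • ((ad f)^i(u) * f^{-i})`.  Then
`Θ 0 = id`, `Θ x ∘ Θ y = Θ (x+y)` for all `x y ∈ k`, and each `Θ x` is a `k`-algebra
automorphism of `B` with inverse `Θ (-x)`. -/
theorem stmt_9 (k : Type*) [Field k] [CharZero k] (B : Type*) [Ring B] [Algebra k B]
    (f : Bˣ)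
    (hnil : ∀ u : B, ∃ N : ℕ, (fun a => (f : B) * a - a * (f : B))^[N] u = 0)
    (Θ : k → (B →ₐ[k] B))
    (hΘ : ∀ (x : k) (u : B) (N : ℕ),
      (fun a => (f : B) * a - a * (f : B))^[N] u = 0 →
      Θ x u = ∑ i ∈ Finset.range N,
        genBinom k x i •
          ((fun a => (f : B) * a - a * (f : B))^[i] u * ((f⁻¹ : Bˣ) : B) ^ i)) :
    Θ 0 = AlgHom.id k B ∧
    (∀ x y : k, (Θ x).comp (Θ y) = Θ (x + y)) ∧
    (∀ x : k, Function.Bijective (Θ x) ∧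
      Function.LeftInverse (Θ (-x)) (Θ x) ∧ Function.RightInverse (Θ (-x)) (Θ x)) := by
  set F : B := (f : B) with hF
  set g : B := ((f⁻¹ : Bˣ) : B) with hg
  set D : B → B := fun a => F * a - a * F with hD
  have hc : Commute F g := (Commute.refl (f : B)).units_inv_right
  have hDz : ∀ m, D^[m] (0 : B) = 0 := fun m =>
    Function.iterate_fixed (by simp [hD]) m
  -- vanishing propagates
  have hD0 : ∀ {N M : ℕ} {u : B}, D^[N] u = 0 → N ≤ M → D^[M] u = 0 := by
    intro N M u h hNM
    have : M = (M - N) + N := by omega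
    rw [this, Function.iterate_add_apply, h, hDz]
  -- D commutes past right multiplication by powers of g
  have hD1 : ∀ (v : B) (j : ℕ), D (v * g ^ j) = D v * g ^ j := by
    intro v j
    show F * (v * g ^ j) - v * g ^ j * F = (F * v - v * F) * g ^ j
    rw [sub_mul, ← mul_assoc, mul_assoc v, ← (hc.pow_right j).eq, ← mul_assoc]
  have hD2 : ∀ (i : ℕ) (v : B) (j : ℕ), D^[i] (v * g ^ j) = D^[i] v * g ^ j := by
    intro i
    induction i with
    | zero => intro v j; rfl
    | succ n ih =>
      intro v j
      rw [Function.iterate_succ_apply', ih, hD1, ← Function.iterate_succ_apply' D n v]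
  -- Part 1: Θ 0 = id
  have h1 : Θ 0 = AlgHom.id k B := by
    ext u
    obtain ⟨N, hN⟩ := hnil u
    rw [hΘ 0 u (N + 1) (hD0 hN (by omega))]
    rw [Finset.sum_eq_single_of_mem 0 (Finset.mem_range.mpr (by omega))]
    · simp [genBinom_zero_zero]
    · intro i _ hi
      rw [genBinom_zero' i (Nat.pos_of_ne_zero hi), zero_smul]
  -- Part 2: composition law
  have h2 : ∀ x y : k, (Θ x).comp (Θ y) = Θ (x + y) := by
    intro x y
    ext u
    obtain ⟨N, hN⟩ := hnil u
    set T : ℕ → B := fun n => D^[n] u * g ^ n with hT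
    have hTz : ∀ n, N ≤ n → T n = 0 := by
      intro n hn
      rw [hT]
      simp only
      rw [hD0 hN hn, zero_mul]
    have key : (Θ x) ((Θ y) u) = ∑ j ∈ Finset.range N, ∑ i ∈ Finset.range N,
        (genBinom k x i * genBinom k y j) • T (i + j) := by
      rw [hΘ y u N hN, map_sum]
      refine Finset.sum_congr rfl fun j hj => ?_
      rw [map_smul]
      have hvan : D^[N] (D^[j] u * g ^ j) = 0 := by
        rw [hD2, ← Function.iterate_add_apply, hD0 hN (by omega), zero_mul]
      rw [hΘ x _ N hvan, Finset.smul_sum]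
      refine Finset.sum_congr rfl fun i hi => ?_
      rw [smul_smul, mul_comm (genBinom k y j), hD2, ← Function.iterate_add_apply,
        mul_assoc, ← pow_add, hT]
      simp only
      rw [Nat.add_comm j i]
    rw [AlgHom.comp_apply, key, conv_sum N _ _ T hTz, hΘ (x + y) u N hN]
    refine Finset.sum_congr rfl fun n hn => ?_
    rw [genBinom_vandermonde]
  -- Part 3
  refine ⟨h1, h2, fun x => ?_⟩
  have hli : Function.LeftInverse (Θ (-x)) (Θ x) := by
    intro u
    have := congrArg (fun φ : B →ₐ[k] B => φ u) (h2 (-x) x)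
    simp only [AlgHom.comp_apply, neg_add_cancel, h1] at this
    simpa using this
  have hri : Function.RightInverse (Θ (-x)) (Θ x) := by
    intro u
    have := congrArg (fun φ : B →ₐ[k] B => φ u) (h2 x (-x))
    simp only [AlgHom.comp_apply, add_neg_cancel, h1] at this
    simpa using this
  exact ⟨⟨hli.injective, hri.surjective⟩, hli, hri⟩
end

section
/- Let A be a unital associative ring and f ∈ A a regular element such that ad(f) is locally nilpotent on A, so that S = {f^n : n ∈ ℕ} is an Ore set in A and the Ore localization S⁻¹A exists. Let M be a simple left A-module on which f acts injectively. Then the localized module S⁻¹M (the Ore localization of M at S, equivalently the base change of M to S⁻¹A) is a simple left S⁻¹A-module. -/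
open OreLocalization

/-- Let `A` be a unital associative ring and `f ∈ A` a regular element
such that `ad(f)` is locally nilpotent on `A`, so that `S = {f^n : n ∈ ℕ}` is an Ore set in
`A` and the Ore localization `S⁻¹A` exists.  Let `M` be a simple left `A`-module on which
`f` acts injectively.  Then the localized module `S⁻¹M` is a simple left `S⁻¹A`-module. -/
theorem stmt_10 (A : Type*) [Ring A] (f : A)
    (hreg : ∀ a : A, (f * a = 0 → a = 0) ∧ (a * f = 0 → a = 0))
    (hnil : ∀ a : A, ∃ N : ℕ, (fun x => f * x - x * f)^[N] a = 0)
    [OreSet (Submonoid.powers f)]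
    (M : Type*) [AddCommGroup M] [Module A M]
    (hsimple : IsSimpleModule A M)
    (hinj : Function.Injective fun m : M => f • m) :
    IsSimpleModule (OreLocalization (Submonoid.powers f) A)
      (OreLocalization (Submonoid.powers f) M) := by
  -- powers of `f` act injectively
  have hpow : ∀ (n : ℕ) (m : M), f ^ n • m = 0 → m = 0 := by
    intro n
    induction n with
    | zero => intro m h; simpa using h
    | succ n ih =>
      intro m h
      rw [pow_succ, mul_smul] at h
      have h2 := ih _ h
      have : f • m = f • 0 := by simpa using h2
      exact hinj this
  -- an element of `(Submonoid.powers f)` acts injectively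
  have hSinj : ∀ (s : (Submonoid.powers f)) (m : M), (s : A) • m = 0 → m = 0 := by
    rintro ⟨_, n, rfl⟩ m h
    exact hpow n m h
  -- key zero criterion
  have hzero : ∀ (m : M) (s : (Submonoid.powers f)), m /ₒ s = 0 → m = 0 := by
    intro m s h
    have h0 : (0 : M) /ₒ (1 : (Submonoid.powers f)) = m /ₒ s := by
      rw [zero_oreDiv]; exact h.symm
    obtain ⟨u, v, hu, -⟩ := oreDiv_eq_iff.mp h0
    have : (u : A) • m = 0 := by
      simpa [Submonoid.smul_def] using hu
    exact hSinj u m this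
  haveI : Nontrivial M := IsSimpleModule.nontrivial A M
  obtain ⟨m₀, hm₀⟩ := exists_ne (0 : M)
  haveI : Nontrivial (OreLocalization (Submonoid.powers f) M) := by
    refine ⟨m₀ /ₒ 1, 0, fun h => hm₀ (hzero m₀ 1 h)⟩
  haveI : Nontrivial (Submodule (OreLocalization (Submonoid.powers f) A)
      (OreLocalization (Submonoid.powers f) M)) :=
    (Submodule.nontrivial_iff _).mpr ‹Nontrivial (OreLocalization (Submonoid.powers f) M)›
  refine { toIsSimpleOrder := ⟨fun N => ?_⟩ }
  · 
    rcases eq_or_ne N ⊥ with hbot | hbot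
    · exact Or.inl hbot
    · right
      -- pull back N to a submodule of M
      set N₀ : Submodule A M :=
        { carrier := {m | m /ₒ (1 : (Submonoid.powers f)) ∈ N}
          add_mem' := by
            intro a b ha hb
            simp only [Set.mem_setOf_eq] at *
            rw [← add_oreDiv]
            exact N.add_mem ha hb
          zero_mem' := by
            simp only [Set.mem_setOf_eq, zero_oreDiv]
            exact N.zero_mem
          smul_mem' := by
            intro a m hm
            simp only [Set.mem_setOf_eq] at *
            have : (a /ₒ (1 : (Submonoid.powers f))) • (m /ₒ (1 : (Submonoid.powers f))) = (a • m) /ₒ (1 : (Submonoid.powers f)) :=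
              smul_div_one
            rw [← this]
            exact N.smul_mem _ hm } with hN₀
      -- N₀ is nonzero
      obtain ⟨x, hxN, hx0⟩ := (Submodule.ne_bot_iff N).mp hbot
      induction x using OreLocalization.ind with
      | _ m s =>
        have hm : m ≠ 0 := by
          intro h; subst h; exact hx0 (zero_oreDiv s)
        have hmem : m /ₒ (1 : (Submonoid.powers f)) ∈ N := by
          have : ((s : A) /ₒ (1 : (Submonoid.powers f))) • (m /ₒ s) = m /ₒ (1 : (Submonoid.powers f)) :=
            OreLocalization.smul_cancel
          rw [← this]
          exact N.smul_mem _ hxN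
        have hN₀top : N₀ = ⊤ := by
          rcases hsimple.toIsSimpleOrder.2 N₀ with h | h
          · exfalso
            have : m ∈ N₀ := hmem
            rw [h] at this
            exact hm this
          · exact h
        -- conclude N = ⊤
        rw [eq_top_iff]
        intro x _
        induction x using OreLocalization.ind with
        | _ r t =>
          have hr : r /ₒ (1 : (Submonoid.powers f)) ∈ N := by
            have : r ∈ N₀ := hN₀top ▸ Submodule.mem_top
            exact this
          have : ((1 : A) /ₒ t) • (r /ₒ (1 : (Submonoid.powers f))) = r /ₒ t := by
            rw [OreLocalization.one_div_smul, one_mul]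
          rw [← this]
          exact N.smul_mem _ hr
end
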